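/- Let h ∈ W^{1,2}_loc be a solution of the Hopf–Laplace equation h_z · conj(h_{z̄}) = φ with φ holomorphic on a domain containing the closed disk of radius ρ centered at 0. Then for almost every radius ρ, ∫_{𝕋_ρ} |h_N|² |dz| = ∫_{𝕋_ρ} |h_T|² |dz| = (1/2) ∫_{𝕋_ρ} |Dh|² |dz|, where 𝕋_ρ = {|z| = ρ}. -/

import Mathlib

open Complex MeasureTheory Metric Filter
open scoped Real Topology

/-- Wirtinger derivative ∂f/∂z = (∂f/∂x - i ∂f/∂y)/2. -/
noncomputable def wz (f : ℂ → ℂ) (z : ℂ) : ℂ :=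
  (fderiv ℝ f z 1 - Complex.I * fderiv ℝ f z Complex.I) / 2

/-- Wirtinger derivative ∂f/∂z̄ = (∂f/∂x + i ∂f/∂y)/2. -/
noncomputable def wzbar (f : ℂ → ℂ) (z : ℂ) : ℂ :=
  (fderiv ℝ f z 1 + Complex.I * fderiv ℝ f z Complex.I) / 2

/-- Normal derivative h_N = (z h_z + z̄ h_z̄)/|z|. -/
noncomputable def wN (h : ℂ → ℂ) (z : ℂ) : ℂ :=
  (z * wz h z + (starRingEnd ℂ) z * wzbar h z) / ((‖z‖ : ℝ) : ℂ)

/-- Tangential derivative h_T = i(z h_z - z̄ h_z̄)/|z|. -/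
noncomputable def wT (h : ℂ → ℂ) (z : ℂ) : ℂ :=
  Complex.I * (z * wz h z - (starRingEnd ℂ) z * wzbar h z) / ((‖z‖ : ℝ) : ℂ)

section Aux

open Set

lemma polar_le (g : ℝ × ℝ → ENNReal) :
    ∫⁻ p in polarCoord.target, ENNReal.ofReal |p.1| * g (polarCoord.symm p) ≤ ∫⁻ x, g x := by
  set B : ℝ × ℝ → ℝ × ℝ →L[ℝ] ℝ × ℝ := fun p =>
    LinearMap.toContinuousLinearMap (Matrix.toLin (Module.Basis.finTwoProd ℝ) (Module.Basis.finTwoProd ℝ)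
      !![Real.cos p.2, -p.1 * Real.sin p.2; Real.sin p.2, p.1 * Real.cos p.2])
  have hB : ∀ p ∈ polarCoord.target, HasFDerivWithinAt polarCoord.symm (B p) polarCoord.target p :=
    fun p _ => (hasFDerivAt_polarCoord_symm p).hasFDerivWithinAt
  have B_det : ∀ p : ℝ × ℝ, (B p).det = p.1 := by
    intro p
    conv_rhs => rw [← one_mul p.1, ← Real.cos_sq_add_sin_sq p.2]
    simp only [B, neg_mul, LinearMap.det_toContinuousLinearMap, LinearMap.det_toLin,
      Matrix.det_fin_two_of, sub_neg_eq_add]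
    ring
  have key := lintegral_image_eq_lintegral_abs_det_fderiv_mul volume
    polarCoord.open_target.measurableSet hB polarCoord.symm.injOn g
  simp_rw [B_det] at key
  calc ∫⁻ p in polarCoord.target, ENNReal.ofReal |p.1| * g (polarCoord.symm p)
      = ∫⁻ x in polarCoord.symm '' polarCoord.target, g x := key.symm
    _ ≤ ∫⁻ x, g x := setLIntegral_le_lintegral _ _

lemma polar_point (p : ℝ × ℝ) :
    Complex.measurableEquivRealProd.symm (polarCoord.symm p)
      = (p.1 : ℂ) * Complex.exp (p.2 * Complex.I) := by
  simp only [Complex.measurableEquivRealProd, Homeomorph.toMeasurableEquiv_symm_coe,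
    Complex.exp_mul_I]
  apply Complex.ext <;>
    simp [polarCoord, Complex.equivRealProdCLM_symm_apply, mul_comm]

lemma polar_le_complex (g : ℂ → ENNReal) :
    ∫⁻ p in polarCoord.target,
      ENNReal.ofReal |p.1| * g ((p.1 : ℂ) * Complex.exp (p.2 * Complex.I)) ≤ ∫⁻ z, g z := by
  have h1 := polar_le (fun x => g (Complex.measurableEquivRealProd.symm x))
  simp_rw [polar_point] at h1
  refine h1.trans (le_of_eq ?_)
  rw [← MeasureTheory.lintegral_map_equiv g Complex.measurableEquivRealProd.symm,
    (MeasurePreserving.symm _ Complex.volume_preserving_equiv_real_prod).map_eq]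

lemma measurable_wz (h : ℂ → ℂ) : Measurable (wz h) :=
  ((measurable_fderiv_apply_const ℝ h 1).sub
    ((measurable_fderiv_apply_const ℝ h Complex.I).const_mul _)).div_const 2

lemma measurable_wzbar (h : ℂ → ℂ) : Measurable (wzbar h) :=
  ((measurable_fderiv_apply_const ℝ h 1).add
    ((measurable_fderiv_apply_const ℝ h Complex.I).const_mul _)).div_const 2

lemma measurable_wN (h : ℂ → ℂ) : Measurable (wN h) := by
  unfold wN
  exact ((measurable_id.mul (measurable_wz h)).add
    ((Complex.continuous_conj.measurable).mul (measurable_wzbar h))).div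
    (Complex.measurable_ofReal.comp continuous_norm.measurable)

lemma measurable_wT (h : ℂ → ℂ) : Measurable (wT h) := by
  unfold wT
  exact (((measurable_id.mul (measurable_wz h)).sub
    ((Complex.continuous_conj.measurable).mul (measurable_wzbar h))).const_mul _).div
    (Complex.measurable_ofReal.comp continuous_norm.measurable)

lemma point_N (h : ℂ → ℂ) {z : ℂ} (hz : z ≠ 0) :
    ‖wN h z‖ ^ 2 = (‖wz h z‖ ^ 2 + ‖wzbar h z‖ ^ 2)
      + 2 * (z ^ 2 * (wz h z * (starRingEnd ℂ) (wzbar h z))).re / ‖z‖ ^ 2 := by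
  have hr : (0:ℝ) < ‖z‖ := norm_pos_iff.mpr hz
  have h1 : ‖wN h z‖ ^ 2
      = Complex.normSq (z * wz h z + (starRingEnd ℂ) z * wzbar h z) / ‖z‖ ^ 2 := by
    rw [wN, norm_div, div_pow, ← Complex.sq_norm]
    norm_num [Complex.norm_real, abs_of_pos hr]
  rw [h1, Complex.normSq_add, Complex.normSq_mul, Complex.normSq_mul, Complex.normSq_conj]
  have h2 : z * wz h z * (starRingEnd ℂ) ((starRingEnd ℂ) z * wzbar h z)
      = z ^ 2 * (wz h z * (starRingEnd ℂ) (wzbar h z)) := by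
    rw [map_mul, Complex.conj_conj]; ring
  rw [h2]
  rw [Complex.normSq_eq_norm_sq z, Complex.normSq_eq_norm_sq (wz h z),
    Complex.normSq_eq_norm_sq (wzbar h z)]
  field_simp

lemma point_T (h : ℂ → ℂ) {z : ℂ} (hz : z ≠ 0) :
    ‖wT h z‖ ^ 2 = (‖wz h z‖ ^ 2 + ‖wzbar h z‖ ^ 2)
      - 2 * (z ^ 2 * (wz h z * (starRingEnd ℂ) (wzbar h z))).re / ‖z‖ ^ 2 := by
  have hr : (0:ℝ) < ‖z‖ := norm_pos_iff.mpr hz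
  have h1 : ‖wT h z‖ ^ 2
      = Complex.normSq (z * wz h z - (starRingEnd ℂ) z * wzbar h z) / ‖z‖ ^ 2 := by
    rw [wT, mul_div_assoc, norm_mul, Complex.norm_I, one_mul, norm_div, div_pow,
      ← Complex.sq_norm]
    norm_num [Complex.norm_real, abs_of_pos hr]
  rw [h1, Complex.normSq_sub, Complex.normSq_mul, Complex.normSq_mul, Complex.normSq_conj]
  have h2 : z * wz h z * (starRingEnd ℂ) ((starRingEnd ℂ) z * wzbar h z)
      = z ^ 2 * (wz h z * (starRingEnd ℂ) (wzbar h z)) := by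
    rw [map_mul, Complex.conj_conj]; ring
  rw [h2]
  rw [Complex.normSq_eq_norm_sq z, Complex.normSq_eq_norm_sq (wz h z),
    Complex.normSq_eq_norm_sq (wzbar h z)]
  field_simp

lemma intervalIntegral_re {q : ℝ → ℂ} {a b : ℝ} (hq : IntervalIntegrable q volume a b) :
    (∫ θ in a..b, (q θ).re) = (∫ θ in a..b, q θ).re := by
  rw [intervalIntegral, intervalIntegral, Complex.sub_re]
  simp only [← RCLike.re_to_complex]
  rw [integral_re hq.1, integral_re hq.2]

lemma circ (X : Set ℂ) (hX : IsOpen X) (φ : ℂ → ℂ) (hφ : DifferentiableOn ℂ φ X)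
    {ρ : ℝ} (hρ : 0 < ρ) (hsub : closedBall (0:ℂ) ρ ⊆ X) :
    (∫ θ in (0:ℝ)..(2 * Real.pi),
      ((ρ:ℂ) * Complex.exp (θ * Complex.I)) ^ 2 * φ ((ρ:ℂ) * Complex.exp (θ * Complex.I))) = 0 := by
  have hc : ContinuousOn (fun z => z * φ z) (closedBall (0:ℂ) ρ) :=
    continuousOn_id.mul ((hφ.continuousOn).mono hsub)
  have hd : ∀ z ∈ ball (0:ℂ) ρ \ (∅ : Set ℂ), DifferentiableAt ℂ (fun z => z * φ z) z := by
    intro z hz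
    have hzX : X ∈ 𝓝 z := hX.mem_nhds (hsub (ball_subset_closedBall hz.1))
    exact differentiableAt_id.mul ((hφ z (hsub (ball_subset_closedBall hz.1))).differentiableAt hzX)
  have h0 := circleIntegral_eq_zero_of_differentiable_on_off_countable hρ.le
    Set.countable_empty hc hd
  rw [circleIntegral] at h0
  simp only [deriv_circleMap, circleMap, Complex.ofReal_zero, zero_add, smul_eq_mul] at h0
  have heq : (fun θ : ℝ => (ρ:ℂ) * Complex.exp (θ * Complex.I) * Complex.I *
        ((ρ:ℂ) * Complex.exp (θ * Complex.I) * φ ((ρ:ℂ) * Complex.exp (θ * Complex.I))))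
      = fun θ : ℝ => Complex.I * (((ρ:ℂ) * Complex.exp (θ * Complex.I)) ^ 2
          * φ ((ρ:ℂ) * Complex.exp (θ * Complex.I))) := by
    funext θ; ring
  rw [heq, intervalIntegral.integral_const_mul] at h0
  exact (mul_eq_zero.1 h0).resolve_left Complex.I_ne_zero

lemma per_aux {E : Type*} (ρ : ℝ) (f : ℂ → E) :
    Function.Periodic (fun θ : ℝ => f ((ρ : ℂ) * Complex.exp (θ * Complex.I))) (2 * Real.pi) := by
  intro θ
  have e1 : Complex.exp ((↑(θ + 2 * Real.pi)) * Complex.I) = Complex.exp (↑θ * Complex.I) := by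
    push_cast
    rw [add_mul, Complex.exp_add, Complex.exp_two_pi_mul_I, mul_one]
  simp only [e1]

lemma shift_aux {E : Type*} [NormedAddCommGroup E] [NormedSpace ℝ E] (f : ℝ → E)
    (hf : Function.Periodic f (2 * Real.pi)) :
    ∫ x in (0:ℝ)..(2 * Real.pi), f x = ∫ x in (-Real.pi)..Real.pi, f x := by
  have h1 := hf.intervalIntegral_add_eq 0 (-Real.pi)
  rw [zero_add] at h1
  rw [h1]
  congr 1
  ring

end Aux

theorem stmt11 (R : ℝ) (hR : 0 < R) (X : Set ℂ) (hX : IsOpen X)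
    (hball : Metric.closedBall 0 R ⊆ X)
    (h φ : ℂ → ℂ) (hφ : DifferentiableOn ℂ φ X) (hcont : ContinuousOn h X)
    (hloc : LocallyIntegrableOn (fun z => ‖wz h z‖ ^ 2 + ‖wzbar h z‖ ^ 2) X volume)
    (hhopf : ∀ᵐ z : ℂ ∂volume, z ∈ X → wz h z * (starRingEnd ℂ) (wzbar h z) = φ z) :
    ∀ᵐ ρ : ℝ ∂(volume.restrict (Set.Ioo (0 : ℝ) R)),
      (∫ θ in (0 : ℝ)..(2 * Real.pi), ‖wN h ((ρ : ℂ) * Complex.exp (θ * Complex.I))‖ ^ 2)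
        = (∫ θ in (0 : ℝ)..(2 * Real.pi), ‖wT h ((ρ : ℂ) * Complex.exp (θ * Complex.I))‖ ^ 2) ∧
      (∫ θ in (0 : ℝ)..(2 * Real.pi), ‖wT h ((ρ : ℂ) * Complex.exp (θ * Complex.I))‖ ^ 2)
        = (1 / 2) * ∫ θ in (0 : ℝ)..(2 * Real.pi),
            2 * (‖wz h ((ρ : ℂ) * Complex.exp (θ * Complex.I))‖ ^ 2
               + ‖wzbar h ((ρ : ℂ) * Complex.exp (θ * Complex.I))‖ ^ 2) := by
  have hπ : (0:ℝ) < Real.pi := Real.pi_pos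
  have hmeasF : Measurable (fun z : ℂ => ‖wz h z‖ ^ 2 + ‖wzbar h z‖ ^ 2) :=
    (((measurable_wz h).norm).pow_const 2).add (((measurable_wzbar h).norm).pow_const 2)
  -- the bad set for the Hopf equation
  obtain ⟨M, hM1, hM2, hM3⟩ := exists_measurable_superset_of_null (ae_iff.1 hhopf)
  -- the continuous polar point map
  have hpmcont : Continuous (fun p : ℝ × ℝ => (p.1 : ℂ) * Complex.exp (p.2 * Complex.I)) := by
    fun_prop
  -- Fact A : a.e. point on the polar target satisfies the Hopf equation
  have hA0 : (∫⁻ p in polarCoord.target, ENNReal.ofReal |p.1|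
      * M.indicator 1 ((p.1 : ℂ) * Complex.exp (p.2 * Complex.I))) = 0 := by
    refine le_antisymm ((polar_le_complex _).trans ?_) zero_le
    rw [lintegral_indicator_one hM2, hM3]
  have hA1 : ∀ᵐ p : ℝ × ℝ ∂(volume.restrict polarCoord.target),
      (ENNReal.ofReal |p.1| * M.indicator 1 ((p.1 : ℂ) * Complex.exp (p.2 * Complex.I))) = 0 := by
    refine (lintegral_eq_zero_iff ?_).1 hA0
    exact (ENNReal.measurable_ofReal.comp measurable_fst.abs).mul
      ((measurable_one.indicator hM2).comp hpmcont.measurable)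
  have hA2 : ∀ᵐ p : ℝ × ℝ ∂(volume.restrict polarCoord.target),
      ((p.1 : ℂ) * Complex.exp (p.2 * Complex.I)) ∈ X →
        wz h ((p.1 : ℂ) * Complex.exp (p.2 * Complex.I))
          * (starRingEnd ℂ) (wzbar h ((p.1 : ℂ) * Complex.exp (p.2 * Complex.I)))
          = φ ((p.1 : ℂ) * Complex.exp (p.2 * Complex.I)) := by
    filter_upwards [hA1, ae_restrict_mem polarCoord.open_target.measurableSet] with p h1 h2
    have hp1 : (0:ℝ) < p.1 := h2.1
    have hne : ENNReal.ofReal |p.1| ≠ 0 := by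
      simp [ENNReal.ofReal_eq_zero, abs_of_pos hp1]; linarith
    have h3 : M.indicator (1 : ℂ → ENNReal) ((p.1 : ℂ) * Complex.exp (p.2 * Complex.I)) = 0 :=
      by simpa [hne] using (mul_eq_zero.1 h1).resolve_left hne
    have h4 : ((p.1 : ℂ) * Complex.exp (p.2 * Complex.I)) ∉ M := by
      intro hmem
      rw [Set.indicator_of_mem hmem] at h3
      simp at h3
    intro hx
    by_contra hcon
    exact h4 (hM1 (by simp [hx, hcon]))
  -- Fact B : finiteness of the polar integral of the energy
  set G : ℂ → ENNReal := fun z => (Metric.closedBall (0:ℂ) R).indicator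
    (fun z => ENNReal.ofReal (‖wz h z‖ ^ 2 + ‖wzbar h z‖ ^ 2)) z with hG
  have hGmeas : Measurable G :=
    (ENNReal.measurable_ofReal.comp hmeasF).indicator measurableSet_closedBall
  have hGfin : ∫⁻ z, G z < ⊤ := by
    simp only [hG]
    rw [lintegral_indicator measurableSet_closedBall]
    have hF : IntegrableOn (fun z : ℂ => ‖wz h z‖ ^ 2 + ‖wzbar h z‖ ^ 2)
        (Metric.closedBall (0:ℂ) R) volume :=
      hloc.integrableOn_compact_subset hball (isCompact_closedBall _ _)
    exact hF.lintegral_lt_top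
  have hB0 : (∫⁻ p in polarCoord.target,
      ENNReal.ofReal |p.1| * G ((p.1 : ℂ) * Complex.exp (p.2 * Complex.I))) < ⊤ :=
    lt_of_le_of_lt (polar_le_complex G) hGfin
  -- rewrite the restricted measure as a product
  have htarget : (volume : Measure (ℝ × ℝ)).restrict polarCoord.target
      = (volume.restrict (Set.Ioi (0:ℝ))).prod (volume.restrict (Set.Ioo (-Real.pi) Real.pi)) := by
    rw [Measure.prod_restrict, ← Measure.volume_eq_prod]
    rfl
  rw [htarget] at hA2 hB0
  have hA3 := MeasureTheory.Measure.ae_ae_of_ae_prod hA2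
  have hmeasprod : Measurable fun p : ℝ × ℝ =>
      ENNReal.ofReal |p.1| * G ((p.1 : ℂ) * Complex.exp (p.2 * Complex.I)) :=
    (measurable_fst.abs.ennreal_ofReal).mul (hGmeas.comp hpmcont.measurable)
  rw [lintegral_prod (fun p : ℝ × ℝ =>
      ENNReal.ofReal |p.1| * G ((p.1 : ℂ) * Complex.exp (p.2 * Complex.I)))
      hmeasprod.aemeasurable] at hB0
  have hB1 : ∀ᵐ ρ : ℝ ∂(volume.restrict (Set.Ioi (0:ℝ))),
      (∫⁻ θ in Set.Ioo (-Real.pi) Real.pi,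
        ENNReal.ofReal |ρ| * G ((ρ : ℂ) * Complex.exp (θ * Complex.I))) < ⊤ := by
    exact ae_lt_top (Measurable.lintegral_prod_right
      (f := fun (ρ θ : ℝ) => ENNReal.ofReal |ρ| * G ((ρ : ℂ) * Complex.exp (θ * Complex.I)))
      hmeasprod) hB0.ne
  filter_upwards [ae_restrict_of_ae_restrict_of_subset Set.Ioo_subset_Ioi_self hA3,
    ae_restrict_of_ae_restrict_of_subset Set.Ioo_subset_Ioi_self hB1,
    ae_restrict_mem measurableSet_Ioo] with ρ hA hB hρ
  obtain ⟨hρ0, hρR⟩ := hρ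
  -- basic facts about points on the circle of radius ρ
  have habs : ∀ θ : ℝ, ‖((ρ:ℂ) * Complex.exp (θ * Complex.I))‖ = ρ := by
    intro θ
    rw [norm_mul, Complex.norm_real, Complex.norm_exp_ofReal_mul_I, mul_one, Real.norm_eq_abs, abs_of_pos hρ0]
  have hne : ∀ θ : ℝ, ((ρ:ℂ) * Complex.exp (θ * Complex.I)) ≠ 0 := by
    intro θ hz
    have := habs θ
    rw [hz] at this
    simp at this
    linarith
  have hmem : ∀ θ : ℝ, ((ρ:ℂ) * Complex.exp (θ * Complex.I)) ∈ Metric.closedBall (0:ℂ) R := by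
    intro θ
    rw [Metric.mem_closedBall, dist_zero_right, habs θ]
    linarith
  have hXmem : ∀ θ : ℝ, ((ρ:ℂ) * Complex.exp (θ * Complex.I)) ∈ X := fun θ => hball (hmem θ)
  -- integrability of the energy on the circle
  have hFi : IntegrableOn (fun θ : ℝ => ‖wz h ((ρ:ℂ) * Complex.exp (θ * Complex.I))‖ ^ 2
      + ‖wzbar h ((ρ:ℂ) * Complex.exp (θ * Complex.I))‖ ^ 2)
      (Set.Ioo (-Real.pi) Real.pi) volume := by
    have hcc : Continuous (fun θ : ℝ => (ρ:ℂ) * Complex.exp (θ * Complex.I)) := by fun_prop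
    have hmeas2 : Measurable (fun θ : ℝ => ‖wz h ((ρ:ℂ) * Complex.exp (θ * Complex.I))‖ ^ 2
        + ‖wzbar h ((ρ:ℂ) * Complex.exp (θ * Complex.I))‖ ^ 2) :=
      hmeasF.comp hcc.measurable
    refine ⟨hmeas2.aestronglyMeasurable, ?_⟩
    have heqG : ∀ θ : ℝ, G ((ρ:ℂ) * Complex.exp (θ * Complex.I))
        = ENNReal.ofReal (‖wz h ((ρ:ℂ) * Complex.exp (θ * Complex.I))‖ ^ 2
          + ‖wzbar h ((ρ:ℂ) * Complex.exp (θ * Complex.I))‖ ^ 2) := by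
      intro θ
      simp only [hG]
      rw [Set.indicator_of_mem (hmem θ)]
    rw [hasFiniteIntegral_iff_norm]
    have hfin2 : (∫⁻ θ in Set.Ioo (-Real.pi) Real.pi,
        ENNReal.ofReal (‖wz h ((ρ:ℂ) * Complex.exp (θ * Complex.I))‖ ^ 2
          + ‖wzbar h ((ρ:ℂ) * Complex.exp (θ * Complex.I))‖ ^ 2)) < ⊤ := by
      have hconst : ENNReal.ofReal |ρ| ≠ 0 := by
        simp [ENNReal.ofReal_eq_zero, abs_of_pos hρ0]; linarith
      have hm : Measurable fun θ : ℝ => G ((ρ : ℂ) * Complex.exp (θ * Complex.I)) :=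
        hGmeas.comp hcc.measurable
      have hfin3 := hB
      rw [lintegral_const_mul _ hm] at hfin3
      have := ENNReal.lt_top_of_mul_ne_top_right hfin3.ne hconst
      simpa only [heqG] using this
    refine lt_of_eq_of_lt ?_ hfin2
    congr 1
    funext θ
    rw [ENNReal.ofReal_eq_ofReal_iff] <;> [skip; positivity; positivity]
    exact Real.norm_of_nonneg (by positivity)
  have hle : -Real.pi ≤ Real.pi := by linarith
  have hcc : Continuous (fun θ : ℝ => (ρ:ℂ) * Complex.exp (θ * Complex.I)) := by fun_prop
  have hrestr : volume.restrict (Set.Ioo (-Real.pi) Real.pi)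
      = volume.restrict (Set.Ioc (-Real.pi) Real.pi) :=
    Measure.restrict_congr_set Ioo_ae_eq_Ioc
  have hFi' : IntegrableOn (fun θ : ℝ => ‖wz h ((ρ:ℂ) * Complex.exp (θ * Complex.I))‖ ^ 2 + ‖wzbar h ((ρ:ℂ) * Complex.exp (θ * Complex.I))‖ ^ 2)
      (Set.Ioc (-Real.pi) Real.pi) volume := by
    rw [IntegrableOn, ← hrestr]; exact hFi
  have hI3 : IntervalIntegrable (fun θ : ℝ => 2 * (‖wz h ((ρ:ℂ) * Complex.exp (θ * Complex.I))‖ ^ 2 + ‖wzbar h ((ρ:ℂ) * Complex.exp (θ * Complex.I))‖ ^ 2))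
      volume (-Real.pi) Real.pi := by
    rw [intervalIntegrable_iff, Set.uIoc_of_le hle]
    exact hFi'.const_mul 2
  have hsum : ∀ θ : ℝ, ‖wN h ((ρ:ℂ) * Complex.exp (θ * Complex.I))‖ ^ 2 + ‖wT h ((ρ:ℂ) * Complex.exp (θ * Complex.I))‖ ^ 2
      = 2 * (‖wz h ((ρ:ℂ) * Complex.exp (θ * Complex.I))‖ ^ 2 + ‖wzbar h ((ρ:ℂ) * Complex.exp (θ * Complex.I))‖ ^ 2) := by
    intro θ
    have h1 := point_N h (hne θ)
    have h2 := point_T h (hne θ)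
    linarith
  have hmN : Measurable fun θ : ℝ => ‖wN h ((ρ:ℂ) * Complex.exp (θ * Complex.I))‖ ^ 2 :=
    (((measurable_wN h).comp hcc.measurable).norm).pow_const 2
  have hmT : Measurable fun θ : ℝ => ‖wT h ((ρ:ℂ) * Complex.exp (θ * Complex.I))‖ ^ 2 :=
    (((measurable_wT h).comp hcc.measurable).norm).pow_const 2
  have hIN : IntervalIntegrable (fun θ : ℝ => ‖wN h ((ρ:ℂ) * Complex.exp (θ * Complex.I))‖ ^ 2) volume (-Real.pi) Real.pi := by
    refine hI3.mono_fun hmN.aestronglyMeasurable (Filter.Eventually.of_forall fun θ => ?_)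
    simp only [Real.norm_eq_abs]
    rw [_root_.abs_of_nonneg (by positivity), _root_.abs_of_nonneg (by positivity)]
    nlinarith [hsum θ, sq_nonneg ‖wT h ((ρ:ℂ) * Complex.exp (θ * Complex.I))‖]
  have hIT : IntervalIntegrable (fun θ : ℝ => ‖wT h ((ρ:ℂ) * Complex.exp (θ * Complex.I))‖ ^ 2) volume (-Real.pi) Real.pi := by
    refine hI3.mono_fun hmT.aestronglyMeasurable (Filter.Eventually.of_forall fun θ => ?_)
    simp only [Real.norm_eq_abs]
    rw [_root_.abs_of_nonneg (by positivity), _root_.abs_of_nonneg (by positivity)]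
    nlinarith [hsum θ, sq_nonneg ‖wN h ((ρ:ℂ) * Complex.exp (θ * Complex.I))‖]
  have hsumInt : (∫ θ in (-Real.pi)..Real.pi, ‖wN h ((ρ:ℂ) * Complex.exp (θ * Complex.I))‖ ^ 2)
        + (∫ θ in (-Real.pi)..Real.pi, ‖wT h ((ρ:ℂ) * Complex.exp (θ * Complex.I))‖ ^ 2)
      = ∫ θ in (-Real.pi)..Real.pi, 2 * (‖wz h ((ρ:ℂ) * Complex.exp (θ * Complex.I))‖ ^ 2 + ‖wzbar h ((ρ:ℂ) * Complex.exp (θ * Complex.I))‖ ^ 2) := by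
    rw [← intervalIntegral.integral_add hIN hIT]
    exact intervalIntegral.integral_congr fun θ _ => hsum θ
  have hqc : ContinuousOn (fun θ : ℝ => ((ρ:ℂ) * Complex.exp (θ * Complex.I)) ^ 2 * φ ((ρ:ℂ) * Complex.exp (θ * Complex.I))) (Set.uIcc (-Real.pi) Real.pi) := by
    exact ((hcc.continuousOn.pow 2).mul
      ((hφ.continuousOn).comp hcc.continuousOn fun θ _ => hXmem θ))
  have hq : IntervalIntegrable (fun θ : ℝ => ((ρ:ℂ) * Complex.exp (θ * Complex.I)) ^ 2 * φ ((ρ:ℂ) * Complex.exp (θ * Complex.I))) volume (-Real.pi) Real.pi :=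
    hqc.intervalIntegrable
  have hq0 : (∫ θ in (-Real.pi)..Real.pi, ((ρ:ℂ) * Complex.exp (θ * Complex.I)) ^ 2 * φ ((ρ:ℂ) * Complex.exp (θ * Complex.I))) = 0 := by
    rw [← shift_aux _ (per_aux ρ (fun z : ℂ => z ^ 2 * φ z))]
    exact circ X hX φ hφ hρ0 ((Metric.closedBall_subset_closedBall hρR.le).trans hball)
  have hk0 : (∫ θ in (-Real.pi)..Real.pi, 4 * (((ρ:ℂ) * Complex.exp (θ * Complex.I)) ^ 2 * φ ((ρ:ℂ) * Complex.exp (θ * Complex.I))).re / ρ ^ 2) = 0 := by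
    have heq2 : (fun θ : ℝ => 4 * (((ρ:ℂ) * Complex.exp (θ * Complex.I)) ^ 2 * φ ((ρ:ℂ) * Complex.exp (θ * Complex.I))).re / ρ ^ 2)
        = fun θ : ℝ => (4 / ρ ^ 2) * (((ρ:ℂ) * Complex.exp (θ * Complex.I)) ^ 2 * φ ((ρ:ℂ) * Complex.exp (θ * Complex.I))).re := by
      funext θ; ring
    rw [heq2, intervalIntegral.integral_const_mul, intervalIntegral_re hq, hq0]
    simp
  have hdiffInt : (∫ θ in (-Real.pi)..Real.pi, ‖wN h ((ρ:ℂ) * Complex.exp (θ * Complex.I))‖ ^ 2)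
      - (∫ θ in (-Real.pi)..Real.pi, ‖wT h ((ρ:ℂ) * Complex.exp (θ * Complex.I))‖ ^ 2) = 0 := by
    rw [← intervalIntegral.integral_sub hIN hIT]
    have hae : ∀ᵐ θ : ℝ ∂volume.restrict (Set.Ioc (-Real.pi) Real.pi),
        ‖wN h ((ρ:ℂ) * Complex.exp (θ * Complex.I))‖ ^ 2 - ‖wT h ((ρ:ℂ) * Complex.exp (θ * Complex.I))‖ ^ 2 = 4 * (((ρ:ℂ) * Complex.exp (θ * Complex.I)) ^ 2 * φ ((ρ:ℂ) * Complex.exp (θ * Complex.I))).re / ρ ^ 2 := by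
      rw [← hrestr]
      filter_upwards [hA] with θ hθ
      have h1 := point_N h (hne θ)
      have h2 := point_T h (hne θ)
      have h3 : wz h ((ρ:ℂ) * Complex.exp (θ * Complex.I)) * (starRingEnd ℂ) (wzbar h ((ρ:ℂ) * Complex.exp (θ * Complex.I))) = φ ((ρ:ℂ) * Complex.exp (θ * Complex.I)) := hθ (hXmem θ)
      rw [h3, habs θ] at h1 h2
      rw [h1, h2]; ring
    have hcongr : (∫ θ in (-Real.pi)..Real.pi, (‖wN h ((ρ:ℂ) * Complex.exp (θ * Complex.I))‖ ^ 2 - ‖wT h ((ρ:ℂ) * Complex.exp (θ * Complex.I))‖ ^ 2))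
        = ∫ θ in (-Real.pi)..Real.pi, 4 * (((ρ:ℂ) * Complex.exp (θ * Complex.I)) ^ 2 * φ ((ρ:ℂ) * Complex.exp (θ * Complex.I))).re / ρ ^ 2 := by
      apply intervalIntegral.integral_congr_ae
      have h5 := (ae_restrict_iff' measurableSet_Ioc).1 hae
      filter_upwards [h5] with θ hθ hmemθ
      exact hθ (by rwa [Set.uIoc_of_le hle] at hmemθ)
    rw [hcongr, hk0]
  have e1 : (∫ θ in (0:ℝ)..(2 * Real.pi), ‖wN h ((ρ:ℂ) * Complex.exp (θ * Complex.I))‖ ^ 2)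
      = ∫ θ in (-Real.pi)..Real.pi, ‖wN h ((ρ:ℂ) * Complex.exp (θ * Complex.I))‖ ^ 2 :=
    shift_aux _ (per_aux ρ (fun z : ℂ => ‖wN h z‖ ^ 2))
  have e2 : (∫ θ in (0:ℝ)..(2 * Real.pi), ‖wT h ((ρ:ℂ) * Complex.exp (θ * Complex.I))‖ ^ 2)
      = ∫ θ in (-Real.pi)..Real.pi, ‖wT h ((ρ:ℂ) * Complex.exp (θ * Complex.I))‖ ^ 2 :=
    shift_aux _ (per_aux ρ (fun z : ℂ => ‖wT h z‖ ^ 2))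
  have e3 : (∫ θ in (0:ℝ)..(2 * Real.pi), 2 * (‖wz h ((ρ:ℂ) * Complex.exp (θ * Complex.I))‖ ^ 2 + ‖wzbar h ((ρ:ℂ) * Complex.exp (θ * Complex.I))‖ ^ 2))
      = ∫ θ in (-Real.pi)..Real.pi, 2 * (‖wz h ((ρ:ℂ) * Complex.exp (θ * Complex.I))‖ ^ 2 + ‖wzbar h ((ρ:ℂ) * Complex.exp (θ * Complex.I))‖ ^ 2) :=
    shift_aux _ (per_aux ρ (fun z : ℂ => 2 * (‖wz h z‖ ^ 2 + ‖wzbar h z‖ ^ 2)))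
  rw [e1, e2, e3]
  constructor
  · linarith
  · linarith
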